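/- arXiv:1203.0967 — 3 statements merged into one kernel-verified Lean document; each statement's English description precedes it below -/
import Mathlib

section
/- Sphere-packing lower bound: for each large m, there exists a set Y ⊆ S^{m-1} of vectors z with coordinates z_i ∈ {−1/√m₀, 0, 1/√m₀} where m₀ = ⌊2m/9⌋, each having exactly m₀ nonzero coordinates, such that ‖z − z'‖ ≥ 1 for distinct z, z' ∈ Y, and |Y| ≥ (9/8)^{m(1+o(1))}. -/
open Finset

theorem zong_greedy {α : Type*} [DecidableEq α] (R : α → α → Prop) [DecidableRel R]
    (hsymm : ∀ a b, R a b → R b a) (B : ℝ) :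
    ∀ V : Finset α, (∀ v ∈ V, ((V.filter (R v)).card : ℝ) ≤ B) → (∀ v ∈ V, R v v) →
    ∃ S ⊆ V, (∀ a ∈ S, ∀ b ∈ S, a ≠ b → ¬ R a b) ∧ (V.card : ℝ) ≤ S.card * B := by
  intro V
  induction V using Finset.strongInduction with
  | _ V ih =>
    intro hball hrefl
    rcases V.eq_empty_or_nonempty with rfl | ⟨v, hv⟩
    · exact ⟨∅, by simp⟩
    · set V' := V \ V.filter (R v) with hV'
      have hss : V' ⊂ V := by
        apply Finset.sdiff_ssubset (Finset.filter_subset _ _)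
        exact ⟨v, Finset.mem_filter.2 ⟨hv, hrefl v hv⟩⟩
      obtain ⟨S, hSV', hSindep, hScard⟩ := ih V' hss
        (fun u hu => le_trans (by
          exact_mod_cast Finset.card_le_card (Finset.filter_subset_filter _ (Finset.sdiff_subset)))
          (hball u (Finset.mem_sdiff.1 hu).1))
        (fun u hu => hrefl u (Finset.mem_sdiff.1 hu).1)
      have hvS : v ∉ S := fun h => (Finset.mem_sdiff.1 (hSV' h)).2
        (Finset.mem_filter.2 ⟨hv, hrefl v hv⟩)
      have hnotball : ∀ b ∈ S, ¬ R v b := fun b hb hR =>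
        (Finset.mem_sdiff.1 (hSV' hb)).2
          (Finset.mem_filter.2 ⟨(Finset.mem_sdiff.1 (hSV' hb)).1, hR⟩)
      refine ⟨insert v S, ?_, ?_, ?_⟩
      · exact Finset.insert_subset hv (hSV'.trans Finset.sdiff_subset)
      · intro a ha b hb hab
        rcases Finset.mem_insert.1 ha with rfl | ha'
        · rcases Finset.mem_insert.1 hb with rfl | hb'
          · exact absurd rfl hab
          · exact hnotball b hb'
        · rcases Finset.mem_insert.1 hb with rfl | hb'
          · exact fun hR => hnotball a ha' (hsymm _ _ hR)
          · exact hSindep a ha' b hb' hab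
      · have h1 : V.card = V'.card + (V.filter (R v)).card := by
          rw [hV', Finset.card_sdiff_of_subset (Finset.filter_subset _ _)]
          have := Finset.card_le_card (Finset.filter_subset (R v) V)
          omega
        have h2 : ((V.filter (R v)).card : ℝ) ≤ B := hball v hv
        rw [h1, Finset.card_insert_of_notMem hvS]
        push_cast
        nlinarith [hScard]

namespace ZongAux

def V (m : ℕ) : Finset (Fin m → ℤ) :=
  (Fintype.piFinset fun _ => ({-1, 0, 1} : Finset ℤ)).filter
    (fun f => (univ.filter fun i => f i ≠ 0).card = 2 * m / 9)

def ip {m : ℕ} (f g : Fin m → ℤ) : ℤ := ∑ i, f i * g i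

theorem mem_V {m : ℕ} {f : Fin m → ℤ} :
    f ∈ V m ↔ (∀ i, f i = -1 ∨ f i = 0 ∨ f i = 1) ∧
      (univ.filter fun i => f i ≠ 0).card = 2 * m / 9 := by
  simp [V, Fintype.mem_piFinset]

theorem sq_eq {m : ℕ} {f : Fin m → ℤ} (hf : f ∈ V m) (i : Fin m) :
    f i * f i = if f i = 0 then 0 else 1 := by
  rcases (mem_V.1 hf).1 i with h | h | h <;> simp [h]

theorem ip_self {m : ℕ} {f : Fin m → ℤ} (hf : f ∈ V m) : ip f f = (2 * m / 9 : ℕ) := by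
  have : ip f f = ∑ i, (if f i = 0 then (0:ℤ) else 1) := by
    unfold ip; exact Finset.sum_congr rfl (fun i _ => sq_eq hf i)
  rw [this, Finset.sum_ite, Finset.sum_const, Finset.sum_const]
  simp [← (mem_V.1 hf).2]

section Ball

theorem ball_bound {m : ℕ} {μ x : ℝ} (hμ : 1 < μ) (hx : 0 < x) {f : Fin m → ℤ}
    (hf : f ∈ V m) :
    (((V m).filter fun g => (2*m/9 : ℕ) + 1 ≤ 2 * ip f g).card : ℝ)
        * (x ^ (2*m/9) * μ ^ (3*(2*m/9)+1))
      ≤ (μ^2 + x*(1+μ^4)) ^ (2*m/9) * (1+2*x) ^ (m - 2*m/9) := by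
  classical
  set t := 2*m/9 with ht
  set e : Fin m → ℤ → ℕ := fun i c => (2 * f i * c + 2 * (f i * f i)).toNat with he
  set w' : ℤ → ℕ := fun c => if c = 0 then 0 else 1 with hw
  set F : Fin m → ℤ → ℝ := fun i c => μ ^ (e i c) * x ^ (w' c) with hF
  have hμ0 : (0:ℝ) < μ := lt_trans one_pos hμ
  have hFnn : ∀ i c, 0 ≤ F i c := fun i c =>
    mul_nonneg (pow_nonneg hμ0.le _) (pow_nonneg hx.le _)
  -- pointwise lower bound for bad g
  have hpoint : ∀ g ∈ (V m).filter (fun g => (t:ℤ) + 1 ≤ 2 * ip f g),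
      x ^ t * μ ^ (3*t+1) ≤ ∏ i, F i (g i) := by
    intro g hg
    obtain ⟨hgV, hgbad⟩ := Finset.mem_filter.1 hg
    have hprod : ∏ i, F i (g i) = μ ^ (∑ i, e i (g i)) * x ^ (∑ i, w' (g i)) := by
      rw [hF]
      simp only []
      rw [Finset.prod_mul_distrib, Finset.prod_pow_eq_pow_sum, Finset.prod_pow_eq_pow_sum]
    have hwsum : ∑ i, w' (g i) = t := by
      have : ∑ i, w' (g i) = (univ.filter fun i => g i ≠ 0).card := by
        rw [Finset.card_filter]
        exact Finset.sum_congr rfl (fun i _ => by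
          rw [hw]; by_cases h : g i = 0 <;> simp [h])
      rw [this, (mem_V.1 hgV).2]
    have hennz : ∀ i, (0:ℤ) ≤ 2 * f i * g i + 2 * (f i * f i) := by
      intro i
      rcases (mem_V.1 hf).1 i with h | h | h <;>
        rcases (mem_V.1 hgV).1 i with h' | h' | h' <;> simp [h, h']
    have hesum : (↑(∑ i, e i (g i)) : ℤ) = 2 * ip f g + 2 * t := by
      push_cast
      have : ∀ i ∈ univ, ((e i (g i) : ℤ)) = 2 * f i * g i + 2 * (f i * f i) := by
        intro i _
        rw [he]
        exact Int.toNat_of_nonneg (hennz i)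
      rw [Finset.sum_congr rfl this, Finset.sum_add_distrib]
      have h1 : ∑ i, 2 * f i * g i = 2 * ip f g := by
        rw [ip, Finset.mul_sum]; exact Finset.sum_congr rfl fun i _ => by ring
      have h2 : ∑ i, 2 * (f i * f i) = 2 * (t:ℤ) := by
        rw [← Finset.mul_sum]
        congr 1
        have := ip_self hf
        rw [ip] at this
        rw [this, ht]
      rw [h1, h2]
    have hege : 3*t+1 ≤ ∑ i, e i (g i) := by
      have : (3*(t:ℤ)+1) ≤ (↑(∑ i, e i (g i)) : ℤ) := by
        rw [hesum]; linarith [hgbad]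
      exact_mod_cast this
    rw [hprod, hwsum]
    calc x ^ t * μ ^ (3*t+1) ≤ x ^ t * μ ^ (∑ i, e i (g i)) :=
        mul_le_mul_of_nonneg_left (pow_le_pow_right₀ hμ.le hege) (pow_nonneg hx.le t)
      _ = (μ ^ (∑ i, e i (g i))) * x ^ t := mul_comm _ _
  -- sum over all of piFinset factorizes
  have hfact : ∑ g ∈ Fintype.piFinset (fun _ : Fin m => ({-1,0,1} : Finset ℤ)),
      ∏ i, F i (g i) = (μ^2 + x*(1+μ^4)) ^ t * (1+2*x) ^ (m - t) := by
    rw [← Finset.prod_univ_sum]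
    have hcoord : ∀ i : Fin m, ∑ c ∈ ({-1,0,1} : Finset ℤ), F i c =
        if f i = 0 then 1+2*x else μ^2 + x*(1+μ^4) := by
      intro i
      rcases (mem_V.1 hf).1 i with h | h | h <;>
        · rw [show ({-1,0,1} : Finset ℤ) = insert (-1) (insert 0 {1}) from rfl]
          rw [Finset.sum_insert (by decide), Finset.sum_insert (by decide),
            Finset.sum_singleton]
          simp [hF, he, hw, h]
          ring
    rw [Finset.prod_congr rfl (fun i _ => hcoord i), Finset.prod_ite]
    rw [Finset.prod_const, Finset.prod_const]
    have hc1 : (univ.filter fun i => ¬ f i = 0).card = t := by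
      exact (mem_V.1 hf).2
    have hc2 : (univ.filter fun i => f i = 0).card = m - t := by
      have := Finset.card_filter_add_card_filter_not (s := (univ : Finset (Fin m)))
        (p := fun i => f i = 0)
      simp only [Finset.card_univ, Fintype.card_fin] at this
      omega
    rw [hc1, hc2, mul_comm]
  calc (((V m).filter fun g => (t:ℤ) + 1 ≤ 2 * ip f g).card : ℝ) * (x ^ t * μ ^ (3*t+1))
      = ∑ _g ∈ (V m).filter (fun g => (t:ℤ) + 1 ≤ 2 * ip f g), x ^ t * μ ^ (3*t+1) := by
        rw [Finset.sum_const, nsmul_eq_mul]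
    _ ≤ ∑ g ∈ (V m).filter (fun g => (t:ℤ) + 1 ≤ 2 * ip f g), ∏ i, F i (g i) :=
        Finset.sum_le_sum hpoint
    _ ≤ ∑ g ∈ Fintype.piFinset (fun _ : Fin m => ({-1,0,1} : Finset ℤ)), ∏ i, F i (g i) := by
        apply Finset.sum_le_sum_of_subset_of_nonneg
        · exact (Finset.filter_subset _ _).trans (Finset.filter_subset _ _)
        · exact fun g _ _ => Finset.prod_nonneg (fun i _ => hFnn i (g i))
    _ = (μ^2 + x*(1+μ^4)) ^ t * (1+2*x) ^ (m - t) := hfact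

end Ball

theorem card_V_ge (m : ℕ) :
    m.choose (2 * m / 9) * 2 ^ (2 * m / 9) ≤ (V m).card := by
  classical
  set t := 2 * m / 9
  set pieces : Finset (Fin m) → Finset (Fin m → ℤ) :=
    fun s => Fintype.piFinset (fun i => if i ∈ s then ({-1, 1} : Finset ℤ) else {0})
  have hsub : ∀ s ∈ Finset.powersetCard t (univ : Finset (Fin m)), pieces s ⊆ V m := by
    intro s hs f hf
    rw [Fintype.mem_piFinset] at hf
    rw [Finset.mem_powersetCard] at hs
    rw [mem_V]
    constructor
    · intro i
      have := hf i
      by_cases h : i ∈ s <;> simp [h] at this <;> tauto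
    · have : (univ.filter fun i => f i ≠ 0) = s := by
        ext i
        have := hf i
        by_cases h : i ∈ s <;> simp [h] at this <;> simp [h]
        · rcases this with h' | h' <;> simp [h']
        · simp [this]
      rw [this, hs.2]
  have hdisj : ∀ s ∈ Finset.powersetCard t (univ : Finset (Fin m)),
      ∀ s' ∈ Finset.powersetCard t (univ : Finset (Fin m)), s ≠ s' →
      Disjoint (pieces s) (pieces s') := by
    intro s _ s' _ hne
    rw [Finset.disjoint_left]
    intro f hf hf'
    apply hne
    rw [Fintype.mem_piFinset] at hf hf'
    ext i
    have h1 := hf i; have h2 := hf' i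
    constructor <;> intro h
    · simp [h] at h1
      by_contra h'
      simp [h'] at h2
      rcases h1 with h1 | h1 <;> simp [h1] at h2 <;> exact h2
    · simp [h] at h2
      by_contra h'
      simp [h'] at h1
      rcases h2 with h2 | h2 <;> simp [h2] at h1 <;> exact h1
  have hcard : ∀ s ∈ Finset.powersetCard t (univ : Finset (Fin m)),
      (pieces s).card = 2 ^ t := by
    intro s hs
    rw [Finset.mem_powersetCard] at hs
    rw [Fintype.card_piFinset]
    calc ∏ i : Fin m, (if i ∈ s then ({-1, 1} : Finset ℤ) else {0}).card
        = ∏ i : Fin m, (if i ∈ s then 2 else 1) := by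
          apply Finset.prod_congr rfl; intro i _; by_cases h : i ∈ s <;> simp [h]
      _ = 2 ^ t := by
          rw [Finset.prod_ite_mem, Finset.univ_inter, Finset.prod_const, hs.2]
  calc m.choose t * 2 ^ t
      = ∑ s ∈ Finset.powersetCard t (univ : Finset (Fin m)), 2 ^ t := by
        simp [Finset.sum_const, Finset.card_powersetCard, mul_comm]
    _ = ((Finset.powersetCard t (univ : Finset (Fin m))).biUnion pieces).card := by
        rw [Finset.card_biUnion hdisj]
        exact (Finset.sum_congr rfl hcard).symm
    _ ≤ (V m).card := Finset.card_le_card (Finset.biUnion_subset.2 hsub)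

def a (m j : ℕ) : ℕ := m.choose j * 2 ^ j * 7 ^ (m - j)

theorem a_succ_ratio (m j : ℕ) (hj : j < m) :
    a m (j+1) * (7 * (j+1)) = a m j * (2 * (m - j)) := by
  calc a m (j+1) * (7 * (j+1))
      = (m.choose (j+1) * (j+1)) * (2^(j+1) * (7^(m-(j+1)) * 7)) := by unfold a; ring
    _ = (m.choose j * (m-j)) * (2^(j+1) * 7^(m-(j+1)+1)) := by
        rw [Nat.choose_succ_right_eq, ← pow_succ]
    _ = (m.choose j * (m-j)) * (2^(j+1) * 7^(m-j)) := by
        rw [show m-(j+1)+1 = m-j from by omega]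
    _ = a m j * (2 * (m - j)) := by unfold a; ring

theorem a_le_up (m : ℕ) : ∀ j, j < 2 * m / 9 → a m j ≤ a m (j+1) := by
  intro j hj
  have hjm : j < m := by omega
  have h := a_succ_ratio m j hjm
  have h2 : 7 * (j+1) ≤ 2 * (m - j) := by omega
  have h3 : a m j * (7 * (j+1)) ≤ a m (j+1) * (7 * (j+1)) := by
    calc a m j * (7 * (j+1)) ≤ a m j * (2 * (m-j)) := Nat.mul_le_mul_left _ h2
      _ = a m (j+1) * (7 * (j+1)) := h.symm
  exact Nat.le_of_mul_le_mul_right h3 (by omega)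

theorem a_le_down (m : ℕ) : ∀ j, 2 * m / 9 + 1 ≤ j → a m (j+1) ≤ a m j := by
  intro j hj
  rcases lt_or_ge j m with hjm | hjm
  · have h := a_succ_ratio m j hjm
    have h2 : 2 * (m - j) ≤ 7 * (j+1) := by omega
    have h3 : a m (j+1) * (7 * (j+1)) ≤ a m j * (7 * (j+1)) := by
      calc a m (j+1) * (7 * (j+1)) = a m j * (2 * (m-j)) := h
        _ ≤ a m j * (7 * (j+1)) := Nat.mul_le_mul_left _ h2
    exact Nat.le_of_mul_le_mul_right h3 (by omega)
  · have : m.choose (j+1) = 0 := Nat.choose_eq_zero_of_lt (by omega)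
    simp [a, this]

theorem a_succ_le (m : ℕ) (hm : 1 ≤ m) : a m (2*m/9 + 1) ≤ 2 * a m (2*m/9) := by
  set t := 2*m/9 with ht
  have htm : t < m := by omega
  have h := a_succ_ratio m t htm
  have h2 : 2 * (m - t) ≤ 2 * (7 * (t+1)) := by omega
  have h3 : a m (t+1) * (7 * (t+1)) ≤ (2 * a m t) * (7 * (t+1)) := by
    calc a m (t+1) * (7 * (t+1)) = a m t * (2 * (m-t)) := h
      _ ≤ a m t * (2 * (7 * (t+1))) := Nat.mul_le_mul_left _ h2
      _ = (2 * a m t) * (7 * (t+1)) := by ring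
  exact Nat.le_of_mul_le_mul_right h3 (by omega)

theorem a_le_max (m : ℕ) (hm : 1 ≤ m) : ∀ j, a m j ≤ 2 * a m (2*m/9) := by
  set t := 2*m/9 with ht
  have hup : ∀ d j, j + d = t → a m j ≤ a m t := by
    intro d
    induction d with
    | zero => intro j hj; rw [show j = t from by omega]
    | succ d ih =>
      intro j hj
      exact le_trans (a_le_up m j (by omega)) (ih (j+1) (by omega))
  have hdown : ∀ j, t + 1 ≤ j → a m j ≤ a m (t+1) := by
    intro j hj
    induction j, hj using Nat.le_induction with
    | base => exact le_refl _
    | succ j hj ih => exact le_trans (a_le_down m j hj) ih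
  intro j
  rcases le_or_gt j t with hj | hj
  · exact le_trans (hup (t - j) j (by omega)) (Nat.le_mul_of_pos_left _ (by norm_num))
  · exact le_trans (hdown j hj) (a_succ_le m hm)

theorem nine_pow_le (m : ℕ) (hm : 1 ≤ m) :
    9 ^ m ≤ 2 * (m + 1) * (m.choose (2*m/9) * 2 ^ (2*m/9) * 7 ^ (m - 2*m/9)) := by
  have hbin : (9:ℕ) ^ m = ∑ j ∈ Finset.range (m+1), a m j := by
    have := add_pow (2:ℕ) 7 m
    norm_num at this
    rw [this]
    exact Finset.sum_congr rfl (fun j _ => by unfold a; ring)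
  rw [hbin]
  calc ∑ j ∈ Finset.range (m+1), a m j
      ≤ ∑ _j ∈ Finset.range (m+1), 2 * a m (2*m/9) :=
        Finset.sum_le_sum (fun j _ => a_le_max m hm j)
    _ = 2 * (m+1) * (m.choose (2*m/9) * 2 ^ (2*m/9) * 7 ^ (m - 2*m/9)) := by
        rw [Finset.sum_const, Finset.card_range]; unfold a; ring

theorem eventually_big : ∃ M : ℕ, 9 ≤ M ∧ ∀ m : ℕ, M ≤ m →
    (2*((m:ℝ)+1)) ≤ (200/203 : ℝ)^(m - 2*m/9) * (5488/4867 : ℝ)^(2*m/9) := by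
  set u : ℝ := 200/203 with hu
  set v : ℝ := 5488/4867 with hv
  set w : ℝ := u^7 * v^2 with hwdef
  have hupos : 0 < u := by norm_num [hu]
  have hvpos : 0 < v := by norm_num [hv]
  have hu1 : u ≤ 1 := by norm_num [hu]
  have hv1 : 1 ≤ v := by norm_num [hv]
  have hw : 1 < w := by rw [hwdef, hu, hv]; norm_num
  have hwpos : 0 < w := lt_trans one_pos hw
  have hrnorm : ‖w⁻¹‖ < 1 := by
    rw [Real.norm_eq_abs, abs_of_pos (inv_pos.2 hwpos)]
    exact inv_lt_one_of_one_lt₀ hw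
  have hsum := summable_pow_mul_geometric_of_norm_lt_one (R := ℝ) 9 hrnorm
  have htend := hsum.tendsto_atTop_zero
  set c₀ : ℝ := u^8/(4^9 * v^8) with hc₀def
  have hc₀ : 0 < c₀ := by positivity
  have hev := htend.eventually (gt_mem_nhds hc₀)
  obtain ⟨M₀, hM₀⟩ := Filter.eventually_atTop.1 hev
  refine ⟨max M₀ 9, le_max_right _ _, ?_⟩
  intro m hm
  have hm9 : 9 ≤ m := le_trans (le_max_right _ _) hm
  have hkey : (m:ℝ)^9 * w⁻¹^m < c₀ := hM₀ m (le_trans (le_max_left _ _) hm)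
  set t := 2*m/9 with ht
  set A : ℝ := u^(m - t) * v^t with hA
  have hApos : 0 < A := by positivity
  have h9 : (2*((m:ℝ)+1))^9 ≤ A^9 := by
    have e1 : A^9 = u^(9*(m-t)) * v^(9*t) := by
      rw [hA, mul_pow, ← pow_mul, ← pow_mul, mul_comm (m-t) 9, mul_comm t 9]
    have e2 : u^(9*(m-t)) ≥ u^(7*m+8) :=
      pow_le_pow_of_le_one hupos.le hu1 (by omega)
    have e3 : v^(9*t) ≥ v^(2*m-8) := pow_le_pow_right₀ hv1 (by omega)
    have e4 : u^(7*m+8) * v^(2*m-8) = w^m * u^8 / v^8 := by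
      have h2m : 2*m-8+8 = 2*m := by omega
      rw [hwdef, mul_pow, ← pow_mul, ← pow_mul, mul_comm 7 m, mul_comm 2 m,
        pow_add u, show m*2 = (2*m-8)+8 from by omega, pow_add v]
      field_simp
      ring_nf
      congr 1
      omega
    have e5 : (4*(m:ℝ))^9 < w^m * u^8 / v^8 := by
      have h1 : (m:ℝ)^9 < c₀ * w^m := by
        have := hkey
        rw [inv_pow] at this
        calc (m:ℝ)^9 = (m:ℝ)^9 * (w^m)⁻¹ * w^m := by
              field_simp
          _ < c₀ * w^m := by
              apply mul_lt_mul_of_pos_right this (by positivity)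
      rw [hc₀def] at h1
      calc (4*(m:ℝ))^9 = 4^9 * (m:ℝ)^9 := mul_pow 4 _ 9
        _ < 4^9 * (u^8/(4^9 * v^8) * w^m) := by
            apply mul_lt_mul_of_pos_left h1 (by norm_num)
        _ = w^m * u^8 / v^8 := by field_simp
    have e6 : (2*((m:ℝ)+1))^9 ≤ (4*(m:ℝ))^9 := by
      apply pow_le_pow_left₀ (by positivity)
      have : (1:ℝ) ≤ m := by exact_mod_cast Nat.one_le_iff_ne_zero.2 (by omega)
      linarith
    calc (2*((m:ℝ)+1))^9 ≤ (4*(m:ℝ))^9 := e6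
      _ ≤ w^m * u^8 / v^8 := le_of_lt e5
      _ = u^(7*m+8) * v^(2*m-8) := e4.symm
      _ ≤ u^(9*(m-t)) * v^(9*t) := by
          apply mul_le_mul e2 e3 (by positivity) (by positivity)
      _ = A^9 := e1.symm
  exact le_of_pow_le_pow_left₀ (by norm_num) hApos.le h9

theorem Knum (t k : ℕ) :
    (9/8:ℝ)^(t+k) *
      (((((7/2:ℝ)^2 + (2/25)*(1+(7/2:ℝ)^4))^t * (1+2*(2/25:ℝ))^k)) /
        ((2/25:ℝ)^t * (7/2:ℝ)^(3*t+1)))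
      * (((200/203:ℝ)^k * (5488/4867:ℝ)^t) * 7^k) ≤ 9^(t+k) := by
  have hC : ((7/2:ℝ)^2 + (2/25)*(1+(7/2:ℝ)^4)) = 4867/200 := by norm_num
  have hD : (1+2*(2/25:ℝ)) = 29/25 := by norm_num
  rw [hC, hD]
  have hden : (0:ℝ) < (2/25:ℝ)^t * (7/2:ℝ)^(3*t+1) := by positivity
  have hre : (9/8:ℝ)^(t+k) * (((4867/200:ℝ)^t * (29/25:ℝ)^k) / ((2/25:ℝ)^t * (7/2:ℝ)^(3*t+1)))
      * (((200/203:ℝ)^k * (5488/4867:ℝ)^t) * 7^k)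
      = ((9/8:ℝ)^(t+k) * ((4867/200:ℝ)^t * (29/25:ℝ)^k)
          * (((200/203:ℝ)^k * (5488/4867:ℝ)^t) * 7^k)) / ((2/25:ℝ)^t * (7/2:ℝ)^(3*t+1)) := by
    ring
  rw [hre, div_le_iff₀ hden]
  have hL : (9/8:ℝ)^(t+k) * ((4867/200:ℝ)^t * (29/25:ℝ)^k)
      * (((200/203:ℝ)^k * (5488/4867:ℝ)^t) * (7:ℝ)^k) = (3087/100:ℝ)^t * 9^k := by
    calc (9/8:ℝ)^(t+k) * ((4867/200:ℝ)^t * (29/25:ℝ)^k)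
          * (((200/203:ℝ)^k * (5488/4867:ℝ)^t) * (7:ℝ)^k)
        = ((9/8:ℝ)*(4867/200)*(5488/4867))^t * ((9/8:ℝ)*(29/25)*((200/203)*7))^k := by
          rw [pow_add, mul_pow ((9/8:ℝ)*(4867/200)), mul_pow (9/8:ℝ) (4867/200:ℝ),
            mul_pow ((9/8:ℝ)*(29/25)), mul_pow (9/8:ℝ) (29/25:ℝ),
            mul_pow (200/203:ℝ) (7:ℝ)]
          ring
      _ = (3087/100:ℝ)^t * 9^k := by norm_num
  have hR : (9:ℝ)^(t+k) * ((2/25:ℝ)^t * (7/2:ℝ)^(3*t+1))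
      = (3087/100:ℝ)^t * 9^k * (7/2) := by
    calc (9:ℝ)^(t+k) * ((2/25:ℝ)^t * (7/2:ℝ)^(3*t+1))
        = ((9:ℝ)*(2/25)*((7/2:ℝ)^3))^t * 9^k * (7/2) := by
          rw [pow_add, pow_succ, pow_mul, mul_pow ((9:ℝ)*(2/25)), mul_pow (9:ℝ) (2/25:ℝ)]
          ring
      _ = (3087/100:ℝ)^t * 9^k * (7/2) := by norm_num
  rw [hL, hR]
  have hA : (0:ℝ) ≤ (3087/100:ℝ)^t * 9^k := by positivity
  linarith

end ZongAux

/-- Zong's sphere-packing construction: for every `ε > 0` and all large `m`, with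
`m₀ = ⌊2m/9⌋`, there is a set `Y` of unit vectors in `ℝ^m` with coordinates in
`{−1/√m₀, 0, 1/√m₀}`, exactly `m₀` nonzero coordinates each, pairwise distances at
least `1`, and `|Y| ≥ (9/8)^{m(1−ε)}`. -/
theorem sphere_packing_lower_bound :
    ∀ ε : ℝ, 0 < ε → ∃ M : ℕ, ∀ m : ℕ, M ≤ m →
      ∃ Y : Finset (EuclideanSpace ℝ (Fin m)),
        (∀ z ∈ Y,
          (∀ i, z i = 0 ∨ z i = 1 / Real.sqrt (2 * m / 9 : ℕ) ∨
            z i = -(1 / Real.sqrt (2 * m / 9 : ℕ))) ∧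
          (Finset.univ.filter (fun i => z i ≠ 0)).card = (2 * m / 9 : ℕ) ∧
          ‖z‖ = 1) ∧
        (∀ z ∈ Y, ∀ z' ∈ Y, z ≠ z' → 1 ≤ ‖z - z'‖) ∧
        ((9 / 8 : ℝ) ^ ((m : ℝ) * (1 - ε)) ≤ Y.card) := by
  intro ε hε
  obtain ⟨M, hM9, hMbig⟩ := ZongAux.eventually_big
  refine ⟨M, fun m hm => ?_⟩
  classical
  have hm9 : 9 ≤ m := le_trans hM9 hm
  have ht2 : 2 ≤ 2*m/9 := by omega
  have htm : 2*m/9 < m := by omega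
  have htR : (0:ℝ) < ((2*m/9 : ℕ) : ℝ) := by
    have : (0:ℕ) < 2*m/9 := by omega
    exact_mod_cast this
  have hsq : (0:ℝ) < Real.sqrt ((2*m/9 : ℕ) : ℝ) := Real.sqrt_pos.2 htR
  -- the "bad pair" relation and ball size bound
  set R : (Fin m → ℤ) → (Fin m → ℤ) → Prop :=
    fun f g => (((2*m/9 : ℕ) : ℤ) + 1 ≤ 2 * ZongAux.ip f g) with hR
  set B : ℝ := (((7/2:ℝ)^2 + (2/25)*(1+(7/2:ℝ)^4))^(2*m/9) * (1+2*(2/25:ℝ))^(m-2*m/9)) /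
      ((2/25:ℝ)^(2*m/9) * (7/2:ℝ)^(3*(2*m/9)+1)) with hB
  have hBpos : 0 < B := by rw [hB]; positivity
  have hball : ∀ f ∈ ZongAux.V m, (((ZongAux.V m).filter (R f)).card : ℝ) ≤ B := by
    intro f hf
    have h := ZongAux.ball_bound (μ := 7/2) (x := 2/25) (by norm_num) (by norm_num) hf
    rw [hB, le_div_iff₀ (by positivity)]
    exact h
  have hrefl : ∀ f ∈ ZongAux.V m, R f f := by
    intro f hf
    have h := ZongAux.ip_self hf
    rw [hR]
    simp only []
    rw [h]
    have : (1:ℤ) ≤ ((2*m/9 : ℕ) : ℤ) := by exact_mod_cast (by omega : 1 ≤ 2*m/9)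
    linarith
  have hsymm : ∀ f g, R f g → R g f := by
    intro f g h
    have hip : ZongAux.ip f g = ZongAux.ip g f :=
      Finset.sum_congr rfl (fun i _ => mul_comm _ _)
    rw [hR] at h ⊢
    simp only [] at h ⊢
    rwa [← hip]
  obtain ⟨Sel, hSelV, hindep, hcount⟩ := zong_greedy R hsymm B (ZongAux.V m) hball hrefl
  -- the map to Euclidean space
  set φ : (Fin m → ℤ) → EuclideanSpace ℝ (Fin m) :=
    fun f => WithLp.toLp 2 (fun i => (f i : ℝ) / Real.sqrt ((2*m/9 : ℕ) : ℝ)) with hφ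
  have hφapp : ∀ f i, φ f i = (f i : ℝ) / Real.sqrt ((2*m/9 : ℕ) : ℝ) := fun f i => rfl
  have hφinj : Function.Injective φ := by
    intro f g hfg
    funext i
    have h1 : (f i : ℝ) / Real.sqrt ((2*m/9 : ℕ) : ℝ)
        = (g i : ℝ) / Real.sqrt ((2*m/9 : ℕ) : ℝ) := by rw [← hφapp, ← hφapp, hfg]
    have h2 : f i = g i := by
      field_simp at h1
      exact_mod_cast h1
    exact h2
  -- sum of squares of coordinates
  have hsumsq : ∀ f ∈ ZongAux.V m, (∑ i, (f i : ℝ) * (f i : ℝ)) = ((2*m/9 : ℕ) : ℝ) := by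
    intro f hf
    have h := ZongAux.ip_self hf
    have h2 : ((∑ i, f i * f i : ℤ) : ℝ) = (((2*m/9 : ℕ) : ℤ) : ℝ) :=
      congrArg (fun z : ℤ => (z : ℝ)) h
    calc (∑ i, (f i : ℝ) * (f i : ℝ)) = ((∑ i, f i * f i : ℤ) : ℝ) := by push_cast; rfl
      _ = ((2*m/9 : ℕ) : ℝ) := by rw [h2]; push_cast; rfl
  refine ⟨Sel.image φ, ?_, ?_, ?_⟩
  · -- pointwise properties
    intro z hz
    obtain ⟨f, hfSel, rfl⟩ := Finset.mem_image.1 hz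
    have hfV : f ∈ ZongAux.V m := hSelV hfSel
    refine ⟨?_, ?_, ?_⟩
    · intro i
      rcases (ZongAux.mem_V.1 hfV).1 i with h | h | h
      · right; right
        rw [hφapp, h]
        push_cast
        ring
      · left
        rw [hφapp, h]
        norm_num
      · right; left
        rw [hφapp, h]
        norm_num
    · have hiff : ∀ i ∈ (univ : Finset (Fin m)), (φ f i ≠ 0 ↔ f i ≠ 0) := by
        intro i _
        rw [hφapp]
        constructor
        · intro h h0
          rw [h0] at h
          norm_num at h
        · intro h h0
          rw [div_eq_zero_iff] at h0
          rcases h0 with h0 | h0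
          · exact h (by simpa using h0)
          · exact (ne_of_gt hsq) h0
      rw [Finset.filter_congr hiff]
      exact (ZongAux.mem_V.1 hfV).2
    · rw [EuclideanSpace.norm_eq]
      have hterm : ∀ i ∈ (univ : Finset (Fin m)),
          ‖φ f i‖^2 = ((f i : ℝ) * (f i : ℝ)) / ((2*m/9 : ℕ) : ℝ) := by
        intro i _
        rw [hφapp, Real.norm_eq_abs, sq_abs, div_pow, Real.sq_sqrt htR.le]
        ring
      rw [Finset.sum_congr rfl hterm, ← Finset.sum_div, hsumsq f hfV,
        div_self (ne_of_gt htR), Real.sqrt_one]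
  · -- pairwise distances
    intro z hz z' hz' hne
    obtain ⟨f, hfSel, rfl⟩ := Finset.mem_image.1 hz
    obtain ⟨g, hgSel, rfl⟩ := Finset.mem_image.1 hz'
    have hfg : f ≠ g := fun h => hne (by rw [h])
    have hgood : ¬ R f g := hindep f hfSel g hgSel hfg
    have hip : 2 * ZongAux.ip f g ≤ ((2*m/9 : ℕ) : ℤ) := by
      rw [hR] at hgood
      simp only [] at hgood
      omega
    have hfV := hSelV hfSel
    have hgV := hSelV hgSel
    have hZ : (∑ i, (f i - g i) * (f i - g i))
        = 2 * ((2*m/9 : ℕ) : ℤ) - 2 * ZongAux.ip f g := by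
      have hexp : ∀ i ∈ (univ : Finset (Fin m)),
          (f i - g i) * (f i - g i) = f i * f i + g i * g i - 2 * (f i * g i) := by
        intro i _; ring
      rw [Finset.sum_congr rfl hexp, Finset.sum_sub_distrib, Finset.sum_add_distrib,
        ← Finset.mul_sum]
      have h1 := ZongAux.ip_self hfV
      have h2 := ZongAux.ip_self hgV
      rw [show (∑ i, f i * f i) = ZongAux.ip f f from rfl,
        show (∑ i, g i * g i) = ZongAux.ip g g from rfl,
        show (∑ i, f i * g i) = ZongAux.ip f g from rfl, h1, h2]
      ring
    rw [EuclideanSpace.norm_eq]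
    rw [Real.one_le_sqrt]
    have hterm : ∀ i ∈ (univ : Finset (Fin m)),
        ‖(φ f - φ g) i‖^2 = (((f i - g i : ℤ) : ℝ) * ((f i - g i : ℤ) : ℝ)) / ((2*m/9 : ℕ) : ℝ) := by
      intro i _
      have happ : (φ f - φ g) i = φ f i - φ g i := rfl
      rw [happ, hφapp, hφapp, div_sub_div_same, Real.norm_eq_abs, sq_abs, div_pow,
        Real.sq_sqrt htR.le]
      push_cast
      ring
    rw [Finset.sum_congr rfl hterm, ← Finset.sum_div]
    rw [le_div_iff₀ htR, one_mul]
    have hcast : (∑ i, ((f i - g i : ℤ) : ℝ) * ((f i - g i : ℤ) : ℝ))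
        = ((∑ i, (f i - g i) * (f i - g i) : ℤ) : ℝ) := by
      push_cast
      rfl
    rw [hcast, hZ]
    have h5 : ((2*m/9 : ℕ) : ℤ) ≤ 2 * ((2*m/9 : ℕ) : ℤ) - 2 * ZongAux.ip f g := by omega
    have h6 : (((2*m/9 : ℕ) : ℤ) : ℝ) ≤ ((2 * ((2*m/9 : ℕ) : ℤ) - 2 * ZongAux.ip f g : ℤ) : ℝ) := by
      exact_mod_cast h5
    rw [show ((2*m/9 : ℕ) : ℝ) = (((2*m/9 : ℕ) : ℤ) : ℝ) from by push_cast; rfl]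
    exact h6
  · -- cardinality bound
    have hYcard : (Sel.image φ).card = Sel.card := Finset.card_image_of_injective _ hφinj
    have h1 : (((9:ℕ)^m : ℕ) : ℝ) ≤ ((2*(m+1) * (m.choose (2*m/9) * 2^(2*m/9) * 7^(m - 2*m/9)) : ℕ) : ℝ) :=
      Nat.cast_le.2 (ZongAux.nine_pow_le m (by omega))
    push_cast at h1
    have h2 : ((m.choose (2*m/9) * 2^(2*m/9) : ℕ) : ℝ) ≤ ((ZongAux.V m).card : ℝ) :=
      Nat.cast_le.2 (ZongAux.card_V_ge m)
    push_cast at h2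
    have h4 : 2*((m:ℝ)+1) ≤ (200/203:ℝ)^(m - 2*m/9) * (5488/4867:ℝ)^(2*m/9) := hMbig m hm
    have hpos : (0:ℝ) < 2*((m:ℝ)+1) * 7^(m - 2*m/9) := by positivity
    -- key numeric inequality
    have hK := ZongAux.Knum (2*m/9) (m - 2*m/9)
    rw [show 2*m/9 + (m - 2*m/9) = m from by omega] at hK
    have step1 : (9/8:ℝ)^m * B * (2*((m:ℝ)+1) * 7^(m - 2*m/9)) ≤ (9:ℝ)^m := by
      calc (9/8:ℝ)^m * B * (2*((m:ℝ)+1) * 7^(m - 2*m/9))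
          ≤ (9/8:ℝ)^m * B * (((200/203:ℝ)^(m - 2*m/9) * (5488/4867:ℝ)^(2*m/9)) * 7^(m - 2*m/9)) := by
            apply mul_le_mul_of_nonneg_left _ (by positivity)
            exact mul_le_mul_of_nonneg_right h4 (by positivity)
        _ ≤ (9:ℝ)^m := by rw [hB]; exact hK
    have step2 : (9:ℝ)^m ≤ ((Sel.card : ℝ) * B) * (2*((m:ℝ)+1) * 7^(m - 2*m/9)) := by
      calc (9:ℝ)^m ≤ 2*((m:ℝ)+1) * ((m.choose (2*m/9) : ℝ) * 2^(2*m/9) * 7^(m - 2*m/9)) := by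
            linarith [h1]
        _ = ((m.choose (2*m/9) : ℝ) * 2^(2*m/9)) * (2*((m:ℝ)+1) * 7^(m - 2*m/9)) := by ring
        _ ≤ ((ZongAux.V m).card : ℝ) * (2*((m:ℝ)+1) * 7^(m - 2*m/9)) :=
            mul_le_mul_of_nonneg_right h2 hpos.le
        _ ≤ ((Sel.card : ℝ) * B) * (2*((m:ℝ)+1) * 7^(m - 2*m/9)) :=
            mul_le_mul_of_nonneg_right hcount hpos.le
    have step3 : (9/8:ℝ)^m ≤ (Sel.card : ℝ) := by
      have hc : (9/8:ℝ)^m * B * (2*((m:ℝ)+1) * 7^(m - 2*m/9))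
          ≤ ((Sel.card : ℝ) * B) * (2*((m:ℝ)+1) * 7^(m - 2*m/9)) := le_trans step1 step2
      have hc2 : (9/8:ℝ)^m * B ≤ (Sel.card : ℝ) * B := le_of_mul_le_mul_right hc hpos
      exact le_of_mul_le_mul_right hc2 hBpos
    calc (9/8:ℝ) ^ ((m:ℝ) * (1-ε)) ≤ (9/8:ℝ) ^ ((m:ℝ)) := by
          apply Real.rpow_le_rpow_of_exponent_le (by norm_num)
          nlinarith [Nat.cast_nonneg (α := ℝ) m, hε]
      _ = (9/8:ℝ)^m := Real.rpow_natCast _ m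
      _ ≤ (Sel.card : ℝ) := step3
      _ = ((Sel.image φ).card : ℝ) := by rw [hYcard]
end

section
/- Let k ≤ m ≤ N. Let A_k be a maximal collection of m-element subsets of {1,...,N} such that any two distinct members intersect in at most k−1 elements. Then |A_k| ≥ C(N,k) / C(m,k)², where C(·,·) is the binomial coefficient. -/
open Finset

lemma fiber_bound_aux {N m k : ℕ} (hk : k ≤ m) (K : Finset (Fin N)) (hK : K.card = k) :
    ((powersetCard m (univ : Finset (Fin N))).filter (fun s => K ⊆ s)).card ≤
      (N - k).choose (m - k) := by
  have : ((powersetCard m (univ : Finset (Fin N))).filter (fun s => K ⊆ s)).card ≤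
      (powersetCard (m - k) ((univ : Finset (Fin N)) \ K)).card := by
    apply Finset.card_le_card_of_injOn (fun s => s \ K)
    · intro s hs
      simp only [mem_coe, mem_filter, mem_powersetCard] at hs ⊢
      obtain ⟨⟨_, hsm⟩, hKs⟩ := hs
      refine ⟨sdiff_subset_sdiff (subset_univ s) (Subset.refl K), ?_⟩
      rw [card_sdiff_of_subset hKs, hsm, hK]
    · intro s hs t ht hst
      simp only [mem_coe, mem_filter, mem_powersetCard] at hs ht
      have := congrArg (fun x => x ∪ K) hst
      simpa [sdiff_union_of_subset hs.2, sdiff_union_of_subset ht.2] using this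
  refine this.trans ?_
  rw [card_powersetCard, card_sdiff_of_subset (subset_univ K), card_univ, Fintype.card_fin, hK]

/-- Counting bound for a maximal family of `m`-sets with pairwise intersections of size
at most `k−1`: `|A_k| ≥ C(N,k)/C(m,k)²`. -/
theorem maximal_packing_card_lower_bound {N m k : ℕ} (hk : k ≤ m) (hm : m ≤ N)
    (A : Finset (Finset (Fin N)))
    (hcard : ∀ s ∈ A, s.card = m)
    (hinter : ∀ s ∈ A, ∀ t ∈ A, s ≠ t → (s ∩ t).card < k)
    (hmax : ∀ s : Finset (Fin N), s.card = m → s ∉ A →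
      ∃ t ∈ A, k ≤ (s ∩ t).card) :
    (N.choose k : ℝ) / (m.choose k : ℝ) ^ 2 ≤ (A.card : ℝ) := by
  set S : Finset (Finset (Fin N)) := powersetCard m (univ : Finset (Fin N)) with hS
  -- each element of S meets some t ∈ A in ≥ k points
  have hcover : S ⊆ A.biUnion (fun t => S.filter (fun s => k ≤ (s ∩ t).card)) := by
    intro s hs
    have hsm : s.card = m := by
      simpa [hS, mem_powersetCard] using hs
    by_cases hsA : s ∈ A
    · refine mem_biUnion.2 ⟨s, hsA, ?_⟩
      simp [mem_filter, hs, inter_self, hsm, hk]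
    · obtain ⟨t, htA, hts⟩ := hmax s hsm hsA
      exact mem_biUnion.2 ⟨t, htA, by simp [mem_filter, hs, hts]⟩
  -- bound on each fiber
  have hfiber : ∀ t ∈ A, (S.filter (fun s => k ≤ (s ∩ t).card)).card ≤
      m.choose k * (N - k).choose (m - k) := by
    intro t htA
    have hsub : S.filter (fun s => k ≤ (s ∩ t).card) ⊆
        (t.powersetCard k).biUnion (fun K => S.filter (fun s => K ⊆ s)) := by
      intro s hs
      simp only [mem_filter] at hs
      obtain ⟨K, hK1, hK2⟩ := Finset.exists_subset_card_eq hs.2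
      refine mem_biUnion.2 ⟨K, ?_, ?_⟩
      · exact mem_powersetCard.2 ⟨hK1.trans inter_subset_right, hK2⟩
      · exact mem_filter.2 ⟨hs.1, hK1.trans inter_subset_left⟩
    calc (S.filter (fun s => k ≤ (s ∩ t).card)).card
        ≤ ((t.powersetCard k).biUnion (fun K => S.filter (fun s => K ⊆ s))).card :=
          card_le_card hsub
      _ ≤ ∑ K ∈ t.powersetCard k, (S.filter (fun s => K ⊆ s)).card := card_biUnion_le
      _ ≤ ∑ K ∈ t.powersetCard k, (N - k).choose (m - k) := by
          refine Finset.sum_le_sum fun K hK => ?_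
          exact fiber_bound_aux hk K (mem_powersetCard.1 hK).2
      _ = m.choose k * (N - k).choose (m - k) := by
          rw [Finset.sum_const, card_powersetCard, hcard t htA, smul_eq_mul]
  -- main counting inequality
  have hmain : N.choose m ≤ A.card * (m.choose k * (N - k).choose (m - k)) := by
    have h1 : S.card ≤ A.card * (m.choose k * (N - k).choose (m - k)) := by
      calc S.card ≤ (A.biUnion (fun t => S.filter (fun s => k ≤ (s ∩ t).card))).card :=
            card_le_card hcover
        _ ≤ ∑ t ∈ A, (S.filter (fun s => k ≤ (s ∩ t).card)).card := card_biUnion_le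
        _ ≤ ∑ t ∈ A, m.choose k * (N - k).choose (m - k) := Finset.sum_le_sum hfiber
        _ = A.card * (m.choose k * (N - k).choose (m - k)) := by
            rw [Finset.sum_const, smul_eq_mul]
    have hScard : S.card = N.choose m := by
      rw [hS, card_powersetCard, card_univ, Fintype.card_fin]
    omega
  -- the binomial identity
  have hid : N.choose m * m.choose k = N.choose k * (N - k).choose (m - k) :=
    Nat.choose_mul hk
  have hXpos : 0 < (N - k).choose (m - k) :=
    Nat.choose_pos (Nat.sub_le_sub_right hm k)
  have hfin : N.choose k ≤ A.card * m.choose k ^ 2 := by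
    have h2 : N.choose m * m.choose k ≤ A.card * (m.choose k * (N - k).choose (m - k)) *
        m.choose k := Nat.mul_le_mul_right _ hmain
    rw [hid] at h2
    have h3 : N.choose k * (N - k).choose (m - k) ≤
        A.card * m.choose k ^ 2 * (N - k).choose (m - k) := by
      calc N.choose k * (N - k).choose (m - k) ≤
          A.card * (m.choose k * (N - k).choose (m - k)) * m.choose k := h2
        _ = A.card * m.choose k ^ 2 * (N - k).choose (m - k) := by ring
    exact Nat.le_of_mul_le_mul_right h3 hXpos
  have hmck : (0 : ℝ) < (m.choose k : ℝ) ^ 2 := by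
    have := Nat.choose_pos hk
    positivity
  rw [div_le_iff₀ hmck]
  exact_mod_cast hfin
end

section
/- Construction of separated sparse unit vectors on disjoint supports: Let π, π' be m-sets with |π ∩ π'| ≤ m₀/2, let r ∈ (0,1), and let y = √(1−r²) e_ν + (r/√m₀) Σ_{l∈π} ε_l e_l and y' = √(1−r²) e_ν + (r/√m₀) Σ_{l∈π'} ε'_l e_l, where ε_l, ε'_l ∈ {−1,+1} and exactly m₀ coordinates are used in each sum (with m₀ ≤ m and ν ∉ π ∪ π'). Then L(y, y') = 2(1 − |⟨y,y'⟩|) ≥ r². -/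
open Finset

/-- Separation of sparse hypothesis vectors on weakly overlapping supports: if the two
supports of size `m₀` overlap in at most `m₀/2` coordinates, then the sign-invariant
loss `L(y,y') = 2(1 − |⟨y,y'⟩|)` of the corresponding perturbed unit vectors is at
least `r²`. -/
theorem separated_sparse_vectors_loss {Nn m₀ : ℕ} (hm₀ : 0 < m₀)
    {r : ℝ} (hr0 : 0 < r) (hr1 : r < 1)
    (ν : Fin Nn) (S S' : Finset (Fin Nn))
    (hS : S.card = m₀) (hS' : S'.card = m₀)
    (hover : 2 * (S ∩ S').card ≤ m₀)
    (hν : ν ∉ S ∪ S')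
    (ε ε' : Fin Nn → ℝ)
    (hε : ∀ l, ε l = 1 ∨ ε l = -1) (hε' : ∀ l, ε' l = 1 ∨ ε' l = -1)
    (y y' : EuclideanSpace ℝ (Fin Nn))
    (hy : ∀ k, y k = if k = ν then Real.sqrt (1 - r ^ 2)
      else if k ∈ S then r / Real.sqrt m₀ * ε k else 0)
    (hy' : ∀ k, y' k = if k = ν then Real.sqrt (1 - r ^ 2)
      else if k ∈ S' then r / Real.sqrt m₀ * ε' k else 0) :
    r ^ 2 ≤ 2 * (1 - |(inner ℝ y y' : ℝ)|) := by
  have hm₀R : (0:ℝ) < m₀ := by exact_mod_cast hm₀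
  have h1r : (0:ℝ) ≤ 1 - r ^ 2 := by nlinarith
  have hν1 : ν ∉ S := fun h => hν (Finset.mem_union_left _ h)
  have hν2 : ν ∉ S' := fun h => hν (Finset.mem_union_right _ h)
  have hνI : ν ∉ S ∩ S' := by simp [hν1, hν2]
  have hcoef : r / Real.sqrt m₀ * (r / Real.sqrt m₀) = r ^ 2 / m₀ := by
    rw [div_mul_div_comm, Real.mul_self_sqrt hm₀R.le, sq]
  have hinner : (inner ℝ y y' : ℝ)
      = (1 - r ^ 2) + (r ^ 2 / m₀) * ∑ i ∈ S ∩ S', ε i * ε' i := by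
    rw [PiLp.inner_apply]
    simp only [RCLike.inner_apply, conj_trivial]
    rw [← Finset.sum_subset (Finset.subset_univ (insert ν (S ∩ S')))]
    · rw [Finset.sum_insert hνI, hy ν, hy' ν, if_pos rfl, if_pos rfl,
        Real.mul_self_sqrt h1r, Finset.mul_sum]
      congr 1
      apply Finset.sum_congr rfl
      intro i hi
      have hiS : i ∈ S := (Finset.mem_inter.mp hi).1
      have hiS' : i ∈ S' := (Finset.mem_inter.mp hi).2
      have hiν : i ≠ ν := fun h => hν1 (h ▸ hiS)
      rw [hy i, hy' i, if_neg hiν, if_neg hiν, if_pos hiS, if_pos hiS']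
      rw [← hcoef]; ring
    · intro i _ hi
      simp only [Finset.mem_insert, Finset.mem_inter, not_or, not_and] at hi
      obtain ⟨hiν, hiSS⟩ := hi
      rw [hy i, hy' i, if_neg hiν, if_neg hiν]
      by_cases h1 : i ∈ S
      · rw [if_neg (hiSS h1), zero_mul]
      · rw [if_neg h1, mul_zero]
  have hsumbound : |∑ i ∈ S ∩ S', ε i * ε' i| ≤ ((S ∩ S').card : ℝ) := by
    calc |∑ i ∈ S ∩ S', ε i * ε' i| ≤ ∑ i ∈ S ∩ S', |ε i * ε' i| :=
          Finset.abs_sum_le_sum_abs _ _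
      _ = ∑ i ∈ S ∩ S', 1 := by
          apply Finset.sum_congr rfl
          intro i _
          rcases hε i with h1 | h1 <;> rcases hε' i with h2 | h2 <;>
            simp [h1, h2]
      _ = ((S ∩ S').card : ℝ) := by simp
  have hcard : 2 * ((S ∩ S').card : ℝ) ≤ (m₀ : ℝ) := by exact_mod_cast hover
  have habs : |(inner ℝ y y' : ℝ)| ≤ 1 - r ^ 2 / 2 := by
    rw [hinner]
    calc |(1 - r ^ 2) + (r ^ 2 / m₀) * ∑ i ∈ S ∩ S', ε i * ε' i|
        ≤ |1 - r ^ 2| + |(r ^ 2 / m₀) * ∑ i ∈ S ∩ S', ε i * ε' i| := abs_add_le _ _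
      _ = (1 - r ^ 2) + (r ^ 2 / m₀) * |∑ i ∈ S ∩ S', ε i * ε' i| := by
          rw [abs_of_nonneg h1r, abs_mul, abs_of_nonneg (by positivity)]
      _ ≤ (1 - r ^ 2) + (r ^ 2 / m₀) * ((S ∩ S').card : ℝ) := by
          gcongr
      _ ≤ 1 - r ^ 2 / 2 := by
          have h2 : r ^ 2 / ↑m₀ * ((S ∩ S').card : ℝ) ≤ r ^ 2 / 2 := by
            rw [div_mul_eq_mul_div, div_le_div_iff₀ hm₀R two_pos]
            nlinarith
          linarith
  nlinarith [habs]
end
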